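/- A topological space X is Q*-normal if and only if for every pair of disjoint Q*-closed subsets A and B of X there exist open subsets U and V such that A ⊆ U, B ⊆ V, and cl(U) ∩ cl(V) = ∅. -/
import Mathlib


open Set Topology

def QStarClosed {X : Type*} [TopologicalSpace X] (A : Set X) : Prop :=
  IsClosed A ∧ interior A = ∅

def QStarOpen {X : Type*} [TopologicalSpace X] (A : Set X) : Prop :=
  QStarClosed Aᶜ

def GClosed {X : Type*} [TopologicalSpace X] (A : Set X) : Prop :=
  ∀ U : Set X, IsOpen U → A ⊆ U → closure A ⊆ U

def QStarGClosed {X : Type*} [TopologicalSpace X] (A : Set X) : Prop :=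
  ∀ U : Set X, QStarOpen U → A ⊆ U → closure A ⊆ U

def QStarGOpen {X : Type*} [TopologicalSpace X] (A : Set X) : Prop :=
  QStarGClosed Aᶜ

def QStarNormal (X : Type*) [TopologicalSpace X] : Prop :=
  ∀ A B : Set X, QStarClosed A → QStarClosed B → Disjoint A B →
    ∃ U V : Set X, IsOpen U ∧ IsOpen V ∧ A ⊆ U ∧ B ⊆ V ∧ Disjoint U V

def NormalSp (X : Type*) [TopologicalSpace X] : Prop :=
  ∀ A B : Set X, IsClosed A → IsClosed B → Disjoint A B →
    ∃ U V : Set X, IsOpen U ∧ IsOpen V ∧ A ⊆ U ∧ B ⊆ V ∧ Disjoint U V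

def GNormal (X : Type*) [TopologicalSpace X] : Prop :=
  ∀ A B : Set X, GClosed A → GClosed B → Disjoint A B →
    ∃ U V : Set X, IsOpen U ∧ IsOpen V ∧ A ⊆ U ∧ B ⊆ V ∧ Disjoint U V

theorem stmt13 {X : Type*} [TopologicalSpace X] :
    QStarNormal X ↔
      ∀ A B : Set X, QStarClosed A → QStarClosed B → Disjoint A B →
        ∃ U V : Set X, IsOpen U ∧ IsOpen V ∧ A ⊆ U ∧ B ⊆ V ∧
          closure U ∩ closure V = ∅ := by
  constructor
  · intro h A B hA hB hAB
    obtain ⟨U, V, hU, hV, hAU, hBV, hUV⟩ := h A B hA hB hAB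
    -- closure V ⊆ Uᶜ, so A ∩ closure V = ∅
    have hclVU : closure V ⊆ Uᶜ := by
      apply closure_minimal _ hU.isClosed_compl
      exact fun x hx hxU => hUV.ne_of_mem hxU hx rfl
    have hAclV : ∀ x ∈ A, x ∉ closure V := fun x hx hc => hclVU hc (hAU hx)
    -- frontier V is Q*-closed
    have hF : QStarClosed (frontier V) := by
      refine ⟨isClosed_frontier, ?_⟩
      rw [← frontier_compl]
      exact interior_frontier hV.isClosed_compl
    have hAF : Disjoint A (frontier V) := by
      rw [Set.disjoint_left]
      intro x hx hxF
      exact hAclV x hx hxF.1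
    obtain ⟨G, H, hG, hH, hAG, hFH, hGH⟩ := h A (frontier V) hA hF hAF
    refine ⟨G ∩ (closure V)ᶜ, V, hG.inter isClosed_closure.isOpen_compl, hV,
      fun x hx => ⟨hAG hx, hAclV x hx⟩, hBV, ?_⟩
    ext x
    simp only [Set.mem_inter_iff, Set.mem_empty_iff_false, iff_false]
    rintro ⟨hx1, hx2⟩
    have hxG : x ∈ closure G := closure_mono Set.inter_subset_left hx1
    have hxH : x ∉ H := closure_minimal
      (fun y hy hyH => hGH.ne_of_mem hy hyH rfl) hH.isClosed_compl hxG
    -- x ∈ closure ((closure V)ᶜ) so x ∉ interior (closure V)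
    have hxnotint : x ∉ interior (closure V) := by
      have : x ∈ closure (closure V)ᶜ := closure_mono Set.inter_subset_right hx1
      rwa [closure_compl, Set.mem_compl_iff] at this
    have hxfr : x ∈ frontier V := by
      rw [hV.frontier_eq]
      exact ⟨hx2, fun hxV => hxnotint (interior_maximal subset_closure hV hxV)⟩
    exact hxH (hFH hxfr)
  · intro h A B hA hB hAB
    obtain ⟨U, V, hU, hV, hAU, hBV, hcl⟩ := h A B hA hB hAB
    refine ⟨U, V, hU, hV, hAU, hBV, ?_⟩
    rw [Set.disjoint_left]
    intro x hxU hxV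
    have : x ∈ closure U ∩ closure V := ⟨subset_closure hxU, subset_closure hxV⟩
    rw [hcl] at this
    exact this
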